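/- arXiv:2405.14898 — 2 statements merged into one kernel-verified Lean document; each statement's English description precedes it below -/
import Mathlib

section
/- Let d ≥ 2 and n ≥ 2d+1. Then σ⁻¹(C_n^d) ≥ d(d+1). -/
/-- A coloring `f : V → Fin 2` is balanced if its two color class sizes differ by at most 1. -/
def BalancedColoring {V : Type*} (f : V → Fin 2) : Prop :=
  (Nat.card {v | f v = 0} : ℤ) - (Nat.card {v | f v = 1} : ℤ) ≤ 1 ∧
  (Nat.card {v | f v = 1} : ℤ) - (Nat.card {v | f v = 0} : ℤ) ≤ 1

/-- The set `g(f)` of bichromatic edges of `G` under the coloring `f`. -/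
def bichromatic {V : Type*} (G : SimpleGraph V) (f : V → Fin 2) : Set (Sym2 V) :=
  {e | e ∈ G.edgeSet ∧ Sym2.lift ⟨fun a b => f a ≠ f b, fun a b => by simp [ne_comm]⟩ e}

/-- `|g(f)|`, the number of bichromatic edges. -/
noncomputable def mixedCount {V : Type*} (G : SimpleGraph V) (f : V → Fin 2) : ℕ :=
  (bichromatic G f).ncard

/-- The rna number / minimum bisection width `σ⁻¹(G)`. -/
noncomputable def rna {V : Type*} (G : SimpleGraph V) : ℕ :=
  sInf {k | ∃ f : V → Fin 2, BalancedColoring f ∧ mixedCount G f = k}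

/-- The `d`-th power of the cycle `C_n`, with vertex set `ZMod n`. -/
def cyclePow (n d : ℕ) : SimpleGraph (ZMod n) where
  Adj u v := u ≠ v ∧ ∃ j : ℕ, 1 ≤ j ∧ j ≤ d ∧ (v = u + (j : ZMod n) ∨ u = v + (j : ZMod n))
  symm := ⟨by
    rintro u v ⟨h, j, h1, h2, h3⟩
    exact ⟨h.symm, j, h1, h2, h3.symm⟩⟩
  loopless := ⟨by rintro u ⟨h, -⟩; exact h rfl⟩


namespace Stmt3Aux



/-- pairs (x,k), x < n, 1 ≤ k ≤ d, with s x true and s((x+k)%n) false -/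
def W (n d : ℕ) (s : ℕ → Bool) : Finset (ℕ × ℕ) :=
  (Finset.range n ×ˢ Finset.Icc 1 d).filter fun p => s p.1 ∧ ¬ s ((p.1 + p.2) % n)

def cnt (n : ℕ) (s : ℕ → Bool) : ℕ := ((Finset.range n).filter fun x => s x).card

def rot (n r : ℕ) (s : ℕ → Bool) : ℕ → Bool := fun x => s ((x + r) % n)

lemma mem_W {n d : ℕ} {s : ℕ → Bool} {p : ℕ × ℕ} :
    p ∈ W n d s ↔ p.1 < n ∧ 1 ≤ p.2 ∧ p.2 ≤ d ∧ s p.1 = true ∧ s ((p.1 + p.2) % n) = false := by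
  simp [W, Finset.mem_filter, Finset.mem_product, Finset.mem_range, Finset.mem_Icc, and_assoc]

lemma mod_cancel {n x y r : ℕ} (hx : x < n) (hy : y < n)
    (h : (x + r) % n = (y + r) % n) : x = y := by
  have h1 : (x + r) % n = (x % n + r % n) % n := by rw [Nat.add_mod]
  have h2 : (y + r) % n = (y % n + r % n) % n := by rw [Nat.add_mod]
  have hx' := Nat.mod_eq_of_lt hx
  have hy' := Nat.mod_eq_of_lt hy
  have : x ≡ y [MOD n] := by
    have : (x + r) ≡ (y + r) [MOD n] := h
    exact Nat.ModEq.add_right_cancel' r this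
  calc x = x % n := hx'.symm
    _ = y % n := this
    _ = y := hy'

lemma rot_W_card (n d r : ℕ) (hr : r ≤ n) (s : ℕ → Bool) :
    (W n d (rot n r s)).card = (W n d s).card := by
  apply Finset.card_bij (fun p _ => ((p.1 + r) % n, p.2))
  · rintro ⟨x, k⟩ hp
    rw [mem_W] at hp ⊢
    obtain ⟨hx, hk1, hk2, hsx, hst⟩ := hp
    have h0 : 0 < n := lt_of_le_of_lt (Nat.zero_le x) hx
    refine ⟨Nat.mod_lt _ h0, hk1, hk2, hsx, ?_⟩
    have : ((x + r) % n + k) % n = ((x + k) % n + r) % n := by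
      rw [Nat.mod_add_mod, Nat.mod_add_mod]; ring_nf
    rw [this]; exact hst
  · rintro ⟨x, k⟩ hp ⟨x', k'⟩ hp' h
    rw [mem_W] at hp hp'
    simp only [Prod.mk.injEq] at h
    obtain ⟨h1, h2⟩ := h
    exact Prod.ext (mod_cancel hp.1 hp'.1 h1) h2
  · rintro ⟨y, k⟩ hp
    rw [mem_W] at hp
    obtain ⟨hy, hk1, hk2, hsy, hst⟩ := hp
    have h0 : 0 < n := lt_of_le_of_lt (Nat.zero_le y) hy
    have key : (((y + (n - r)) % n) + r) % n = y := by
      rw [Nat.mod_add_mod]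
      have : y + (n - r) + r = y + n := by omega
      rw [this, Nat.add_mod_right, Nat.mod_eq_of_lt hy]
    refine ⟨((y + (n - r)) % n, k), ?_, ?_⟩
    · rw [mem_W]
      refine ⟨Nat.mod_lt _ h0, hk1, hk2, ?_, ?_⟩
      · show s ((((y + (n - r)) % n) + r) % n) = true
        rw [key]; exact hsy
      · show s (((((y + (n - r)) % n) + k) % n + r) % n) = false
        rw [Nat.mod_add_mod]
        have : (y + (n - r)) % n + k + r = ((y + (n - r)) % n + r) + k := by ring
        rw [this, ← Nat.mod_add_mod, key]
        exact hst
    · simp [key]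

lemma rot_cnt (n r : ℕ) (hr : r ≤ n) (s : ℕ → Bool) :
    cnt n (rot n r s) = cnt n s := by
  apply Finset.card_bij (fun x _ => (x + r) % n)
  · intro x hx
    simp only [Finset.mem_filter, Finset.mem_range] at hx ⊢
    have h0 : 0 < n := lt_of_le_of_lt (Nat.zero_le x) hx.1
    exact ⟨Nat.mod_lt _ h0, hx.2⟩
  · intro x hx x' hx' h
    simp only [Finset.mem_filter, Finset.mem_range] at hx hx'
    exact mod_cancel hx.1 hx'.1 h
  · intro y hy
    simp only [Finset.mem_filter, Finset.mem_range] at hy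
    have h0 : 0 < n := lt_of_le_of_lt (Nat.zero_le y) hy.1
    have key : (((y + (n - r)) % n) + r) % n = y := by
      rw [Nat.mod_add_mod]
      have : y + (n - r) + r = y + n := by omega
      rw [this, Nat.add_mod_right, Nat.mod_eq_of_lt hy.1]
    refine ⟨(y + (n - r)) % n, ?_, key⟩
    simp only [Finset.mem_filter, Finset.mem_range]
    refine ⟨Nat.mod_lt _ h0, ?_⟩
    show s ((((y + (n - r)) % n) + r) % n) = true
    rw [key]; exact hy.2



lemma del_W (n d : ℕ) (hd : 1 ≤ d) (hn : 2 * d ≤ n) (s : ℕ → Bool) :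
    (W n d s).card ≤ (W (n + 1) d s).card := by
  classical
  apply Finset.card_le_card_of_injOn (fun p =>
    if p.1 + p.2 < n then p
    else if p.2 < d then (p.1, p.2 + 1)
    else if s n then (n, p.1 + d + 1 - n) else (p.1, n - p.1))
  · rintro ⟨x, k⟩ hp
    rw [Finset.mem_coe, mem_W] at hp; rw [Finset.mem_coe]
    obtain ⟨hx, hk1, hk2, hsx, hst⟩ := hp
    simp only
    by_cases hA : x + k < n
    · rw [if_pos hA, mem_W]
      have e1 : (x + k) % n = x + k := Nat.mod_eq_of_lt hA
      have e2 : (x + k) % (n + 1) = x + k := Nat.mod_eq_of_lt (by omega)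
      exact ⟨by omega, hk1, hk2, hsx, by rw [e2, ← e1]; exact hst⟩
    · rw [if_neg hA]
      have hxk : x + k < 2 * n := by omega
      have e1 : (x + k) % n = x + k - n := by
        rw [Nat.mod_eq_sub_mod (by omega), Nat.mod_eq_of_lt (by omega)]
      by_cases hB : k < d
      · rw [if_pos hB, mem_W]
        have e2 : (x + (k + 1)) % (n + 1) = x + k - n := by
          rw [Nat.mod_eq_sub_mod (by omega), Nat.mod_eq_of_lt (by omega)]; omega
        exact ⟨by omega, by omega, by omega, hsx, by rw [e2, ← e1]; exact hst⟩
      · rw [if_neg hB]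
        have hkd : k = d := by omega
        by_cases hc : s n
        · rw [if_pos hc, mem_W]
          have e2 : (n + (x + d + 1 - n)) % (n + 1) = x + k - n := by
            have : n + (x + d + 1 - n) = (x + k - n) + (n + 1) := by omega
            rw [this, Nat.add_mod_right, Nat.mod_eq_of_lt (by omega)]
          exact ⟨by omega, by omega, by omega, hc, by rw [e2, ← e1]; exact hst⟩
        · rw [if_neg hc, mem_W]
          have e2 : (x + (n - x)) % (n + 1) = n := by
            rw [Nat.add_sub_cancel' (le_of_lt hx), Nat.mod_eq_of_lt (by omega)]
          refine ⟨by omega, by omega, by omega, hsx, by rw [e2]; simpa using hc⟩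
  · rintro ⟨x, k⟩ hp ⟨x', k'⟩ hp' h
    rw [Finset.mem_coe, mem_W] at hp hp'
    obtain ⟨hx, hk1, hk2, -, -⟩ := hp
    obtain ⟨hx', hk1', hk2', -, -⟩ := hp'
    simp only at h
    by_cases hc : s n <;>
      [ (simp only [hc, if_true] at h); (simp only [hc, if_false] at h)] <;>
      split_ifs at h with h1 h2 h3 h4 h5 h6 h7 h8 <;>
      simp only [Prod.mk.injEq] at h <;>
      (try exact h) <;>
      (try exact Prod.ext (by omega) (by omega)) <;>
      omega



lemma cnt_add_cnt_not (n : ℕ) (s : ℕ → Bool) :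
    cnt n s + cnt n (fun x => ! s x) = n := by
  have := Finset.card_filter_add_card_filter_not
    (s := Finset.range n) (p := fun x => s x = true)
  simpa [cnt, Finset.card_range] using this

lemma pair_eq_pair_iff {a b c e : ℕ} (h : ({a, b} : Finset ℕ) = {c, e}) :
    (a = c ∧ b = e) ∨ (a = e ∧ b = c) := by
  have h1 : a ∈ ({c, e} : Finset ℕ) := by rw [← h]; simp
  have h2 : b ∈ ({c, e} : Finset ℕ) := by rw [← h]; simp
  have h3 : c ∈ ({a, b} : Finset ℕ) := by rw [h]; simp
  have h4 : e ∈ ({a, b} : Finset ℕ) := by rw [h]; simp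
  simp only [Finset.mem_insert, Finset.mem_singleton] at h1 h2 h3 h4
  rcases h1 with rfl | rfl <;> rcases h2 with h2 | h2 <;> omega

lemma key_arith (d : ℕ) (hd : 1 ≤ d) (a w p : ℕ) (h1 : d ≤ a) (h2 : a ≤ d + 1)
    (h3 : w + p = a * d) (h4 : 2 * p ≤ a * (a - 1)) : d * (d + 1) ≤ 2 * w := by
  obtain ⟨e, rfl⟩ : ∃ e, d = e + 1 := ⟨d - 1, by omega⟩
  have : a = e + 1 ∨ a = e + 2 := by omega
  rcases this with rfl | rfl
  · simp only [Nat.add_sub_cancel] at h4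
    nlinarith
  · have : e + 2 - 1 = e + 1 := by omega
    rw [this] at h4
    nlinarith

lemma base_case (d : ℕ) (hd : 1 ≤ d) (s : ℕ → Bool)
    (ha : d ≤ cnt (2 * d + 1) s) (hb : d ≤ cnt (2 * d + 1) (fun x => ! s x)) :
    d * (d + 1) ≤ 2 * (W (2 * d + 1) d s).card := by
  classical
  set n := 2 * d + 1 with hn
  set a := cnt n s with hadef
  -- the "same color" pair set
  set P : Finset (ℕ × ℕ) :=
    (Finset.range n ×ˢ Finset.Icc 1 d).filter fun p => s p.1 ∧ s ((p.1 + p.2) % n) with hP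
  -- partition: W + P = a * d
  have hsplit : (W n d s).card + P.card = a * d := by
    have h1 : (W n d s).card + P.card =
        (((Finset.range n ×ˢ Finset.Icc 1 d).filter fun p => s p.1)).card := by
      rw [add_comm]
      have := Finset.card_filter_add_card_filter_not
        (s := (Finset.range n ×ˢ Finset.Icc 1 d).filter fun p => s p.1)
        (p := fun p => s ((p.1 + p.2) % n) = true)
      rw [← this]
      congr 1
      · rw [hP, Finset.filter_filter]
      · rw [W, Finset.filter_filter]
    rw [h1]
    have h2 : ((Finset.range n ×ˢ Finset.Icc 1 d).filter fun p => s p.1) =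
        ((Finset.range n).filter fun x => s x) ×ˢ Finset.Icc 1 d := by
      ext ⟨x, k⟩
      simp [Finset.mem_filter, Finset.mem_product, and_assoc, and_comm, and_left_comm]
    rw [h2, Finset.card_product, Nat.card_Icc]
    simp [hadef, cnt]
  -- injection from P into 2-element subsets of trues
  have hPle : P.card ≤ Nat.choose a 2 := by
    have : P.card ≤ (((Finset.range n).filter fun x => s x).powersetCard 2).card := by
      apply Finset.card_le_card_of_injOn (fun p => {p.1, (p.1 + p.2) % n})
      · rintro ⟨x, k⟩ hp
        simp only [hP, Finset.mem_coe, Finset.mem_filter, Finset.mem_product, Finset.mem_range,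
          Finset.mem_Icc] at hp
        obtain ⟨⟨hx, hk1, hk2⟩, hsx, hst⟩ := hp
        have hne : x ≠ (x + k) % n := by
          intro h
          have : (x + k) % n = (x % n + k % n) % n := by rw [Nat.add_mod]
          have hmod : x % n = x := Nat.mod_eq_of_lt hx
          have : x ≡ x + k [MOD n] := by rw [Nat.ModEq, hmod, ← h]
          have : 0 ≡ k [MOD n] := (Nat.ModEq.add_left_cancel' x (by simpa using this))
          have hdvd : (n:ℕ) ∣ k := by
            have := this.symm
            rwa [Nat.modEq_zero_iff_dvd] at this
          have := Nat.le_of_dvd (by omega) hdvd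
          omega
        rw [Finset.mem_coe, Finset.mem_powersetCard]
        constructor
        · intro y hy
          simp only [Finset.mem_insert, Finset.mem_singleton] at hy
          rcases hy with rfl | rfl
          · simp only [Finset.mem_filter, Finset.mem_range]; exact ⟨hx, hsx⟩
          · simp only [Finset.mem_filter, Finset.mem_range]
            exact ⟨Nat.mod_lt _ (by omega), hst⟩
        · rw [Finset.card_insert_of_notMem (by simpa using hne), Finset.card_singleton]
      · rintro ⟨x, k⟩ hp ⟨x', k'⟩ hp' h
        simp only [hP, Finset.mem_coe, Finset.mem_filter, Finset.mem_product,
          Finset.mem_range, Finset.mem_Icc] at hp hp'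
        obtain ⟨⟨hx, hk1, hk2⟩, hsx, hst⟩ := hp
        obtain ⟨⟨hx', hk1', hk2'⟩, hsx', hst'⟩ := hp'
        simp only at h
        -- pair equality
        have h := pair_eq_pair_iff h
        have hmod : ∀ z : ℕ, z < n → z % n = z := fun z hz => Nat.mod_eq_of_lt hz
        rcases h with ⟨rfl, h2⟩ | ⟨h1, h2⟩
        · -- same first: k ≡ k' mod n
          have : k % n = k' % n := by
            have hx1 : (x + k) % n = (x + k') % n := h2
            have := Nat.ModEq.add_left_cancel' x (hx1 : x + k ≡ x + k' [MOD n])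
            exact this
          rw [Nat.mod_eq_of_lt (by omega), Nat.mod_eq_of_lt (by omega)] at this
          exact Prod.ext rfl this
        · -- cross case: contradiction
          exfalso
          -- x = (x'+k')%n and x' = (x+k)%n
          have hc1 : x ≡ x' + k' [MOD n] := by
            rw [Nat.ModEq, Nat.mod_eq_of_lt hx, h1]
          have hc2 : x' ≡ x + k [MOD n] := by
            rw [Nat.ModEq, Nat.mod_eq_of_lt hx', ← h2]
          have : x + x' ≡ x' + x + (k + k') [MOD n] := by
            have := hc1.add hc2
            calc x + x' ≡ (x' + k') + (x + k) [MOD n] := this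
              _ = x' + x + (k + k') := by ring
          have h0 : 0 ≡ k + k' [MOD n] := by
            have : x' + x + 0 ≡ x' + x + (k + k') [MOD n] := by
              simpa [add_comm, add_assoc, add_left_comm] using this
            exact Nat.ModEq.add_left_cancel' (x' + x) this
          have hdvd : n ∣ k + k' := by
            have := h0.symm
            rwa [Nat.modEq_zero_iff_dvd] at this
          have := Nat.le_of_dvd (by omega) hdvd
          omega
    calc P.card ≤ _ := this
      _ = Nat.choose a 2 := by rw [Finset.card_powersetCard]; rfl
  -- arithmetic finish
  have hchoose : 2 * Nat.choose a 2 = a * (a - 1) := by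
    rw [Nat.choose_two_right]
    rcases Nat.eq_zero_or_pos a with h | h
    · simp [h]
    · have heven : 2 ∣ a * (a - 1) := by
        rcases Nat.even_or_odd a with he | ho
        · exact Dvd.dvd.mul_right he.two_dvd _
        · have : Even (a - 1) := by
            rcases ho with ⟨m, hm⟩; exact ⟨m, by omega⟩
          exact Dvd.dvd.mul_left this.two_dvd _
      rw [Nat.mul_div_cancel' heven]
  have hab : a + cnt n (fun x => ! s x) = n := cnt_add_cnt_not n s
  have hble : a ≤ d + 1 := by omega
  -- 2*W = 2ad - 2P ≥ 2ad - a(a-1) ≥ d(d+1)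
  have hfin : 2 * P.card ≤ a * (a - 1) := by
    rw [← hchoose]; omega
  exact key_arith d hd a (W n d s).card P.card ha hble hsplit hfin


lemma main_word (d : ℕ) (hd : 1 ≤ d) : ∀ n, 2 * d + 1 ≤ n → ∀ s : ℕ → Bool,
    d ≤ cnt n s → d ≤ cnt n (fun x => ! s x) → d * (d + 1) ≤ 2 * (W n d s).card := by
  intro n hle
  induction n, hle using Nat.le_induction with
  | base => intro s ha hb; exact base_case d hd s ha hb
  | succ n hn ih =>
    intro s ha hb
    -- trues + falses = n+1 ≥ 2d+2 so one side exceeds d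
    have htot : cnt (n+1) s + cnt (n+1) (fun x => ! s x) = n + 1 := cnt_add_cnt_not (n+1) s
    have hsucc : ∀ t : ℕ → Bool, cnt (n+1) t = cnt n t + (if t n then 1 else 0) := by
      intro t
      simp only [cnt, Finset.range_add_one, Finset.filter_insert]
      split_ifs with h
      · rw [Finset.card_insert_of_notMem (by simp)]
      · simp [h]
    -- find an element p to delete
    have hcase : d + 1 ≤ cnt (n+1) s ∨ d + 1 ≤ cnt (n+1) (fun x => ! s x) := by omega
    have hex : ∃ p, p < n + 1 ∧
        ((d + 1 ≤ cnt (n+1) s ∧ s p = true) ∨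
         (d + 1 ≤ cnt (n+1) (fun x => ! s x) ∧ s p = false)) := by
      rcases hcase with hc | hc
      · have : ((Finset.range (n+1)).filter fun x => s x).Nonempty := by
          rw [← Finset.card_pos]; change 0 < cnt (n+1) s; omega
        obtain ⟨p, hp⟩ := this
        simp only [Finset.mem_filter, Finset.mem_range] at hp
        exact ⟨p, hp.1, Or.inl ⟨hc, hp.2⟩⟩
      · have : ((Finset.range (n+1)).filter fun x => ! s x).Nonempty := by
          rw [← Finset.card_pos]; change 0 < cnt (n+1) (fun x => ! s x); omega
        obtain ⟨p, hp⟩ := this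
        simp only [Finset.mem_filter, Finset.mem_range, Bool.not_eq_true'] at hp
        exact ⟨p, hp.1, Or.inr ⟨hc, hp.2⟩⟩
    obtain ⟨p, hplt, hpcol⟩ := hex
    -- rotate so that p goes to position n
    set s₁ : ℕ → Bool := rot (n+1) (p+1) s with hs₁
    have hr : p + 1 ≤ n + 1 := by omega
    have hrotW : (W (n+1) d s₁).card = (W (n+1) d s).card := rot_W_card (n+1) d (p+1) hr s
    have hrotc : cnt (n+1) s₁ = cnt (n+1) s := rot_cnt (n+1) (p+1) hr s
    have hrotc' : cnt (n+1) (fun x => ! s₁ x) = cnt (n+1) (fun x => ! s x) :=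
      rot_cnt (n+1) (p+1) hr (fun x => ! s x)
    have hlast : s₁ n = s p := by
      show s ((n + (p + 1)) % (n+1)) = s p
      have : n + (p + 1) = p + (n + 1) := by omega
      rw [this, Nat.add_mod_right, Nat.mod_eq_of_lt hplt]
    -- apply IH to s₁ with length n
    have hnot₁ : (fun x => ! s₁ x) = rot (n+1) (p+1) (fun x => ! s x) := rfl
    have h1 : cnt (n+1) s₁ = cnt n s₁ + (if s₁ n then 1 else 0) := hsucc s₁
    have h2 : cnt (n+1) (fun x => ! s₁ x) = cnt n (fun x => ! s₁ x)
        + (if ! s₁ n then 1 else 0) := hsucc (fun x => ! s₁ x)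
    have hIH : d * (d + 1) ≤ 2 * (W n d s₁).card := by
      apply ih s₁ <;>
      · rcases hpcol with ⟨hc, hcol⟩ | ⟨hc, hcol⟩ <;>
        · rw [hlast] at h1 h2
          rw [hcol] at h1 h2
          norm_num at h1 h2
          omega
    calc d * (d + 1) ≤ 2 * (W n d s₁).card := hIH
      _ ≤ 2 * (W (n+1) d s₁).card := by
          have := del_W n d hd (by omega) s₁
          omega
      _ = 2 * (W (n+1) d s).card := by rw [hrotW]


end Stmt3Aux

open Stmt3Aux

section Bridge

variable {n : ℕ}

lemma card_zmod_filter (n : ℕ) [NeZero n] (p : ℕ → Prop) [DecidablePred p] :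
    (Finset.univ.filter fun v : ZMod n => p v.val).card = ((Finset.range n).filter p).card := by
  apply Finset.card_bij (fun v _ => v.val)
  · intro v hv
    simp only [Finset.mem_filter, Finset.mem_range] at hv ⊢
    exact ⟨ZMod.val_lt v, hv.2⟩
  · intro v _ w _ h
    exact ZMod.val_injective n h
  · intro x hx
    simp only [Finset.mem_filter, Finset.mem_range] at hx
    refine ⟨(x : ZMod n), ?_, ?_⟩
    · simp only [Finset.mem_filter, Finset.mem_univ, true_and]
      rw [ZMod.val_cast_of_lt hx.1]; exact hx.2
    · exact ZMod.val_cast_of_lt hx.1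

lemma natCard_class (n : ℕ) [NeZero n] (f : ZMod n → Fin 2) (c : Fin 2) :
    Nat.card {v : ZMod n | f v = c} = (Finset.univ.filter fun v : ZMod n => f v = c).card := by
  classical
  rw [Nat.card_coe_set_eq, Set.ncard_eq_toFinset_card', Set.toFinset_setOf]

lemma cnt_class (n : ℕ) [NeZero n] (f : ZMod n → Fin 2) (c : Fin 2) :
    cnt n (fun x => f (x : ZMod n) == c) = Nat.card {v : ZMod n | f v = c} := by
  rw [natCard_class n f c]
  have h1 : (Finset.univ.filter fun v : ZMod n => f v = c)
      = (Finset.univ.filter fun v : ZMod n => f ((v.val : ℕ) : ZMod n) = c) := by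
    apply Finset.filter_congr
    intro v _
    rw [ZMod.natCast_rightInverse v]
  rw [h1]
  have h2 := card_zmod_filter n (fun x => f ((x : ℕ) : ZMod n) = c)
  rw [h2, cnt]
  congr 1
  apply Finset.filter_congr
  intro x _
  simp only [beq_iff_eq]

lemma fin2_cases (t : Fin 2) : t = 0 ∨ t = 1 := by omega



end Bridge

open Stmt3Aux in
theorem stmt3 (d n : ℕ) (hd : 2 ≤ d) (hn : 2 * d + 1 ≤ n) :
    d * (d + 1) ≤ rna (cyclePow n d) := by
  haveI : NeZero n := ⟨by omega⟩
  -- every balanced coloring has many bichromatic edges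
  have key : ∀ f : ZMod n → Fin 2, BalancedColoring f →
      d * (d + 1) ≤ mixedCount (cyclePow n d) f := by
    intro f hbal
    classical
    -- class sizes
    set c0 := Nat.card {v : ZMod n | f v = 0} with hc0
    set c1 := Nat.card {v : ZMod n | f v = 1} with hc1
    have hsum : c0 + c1 = n := by
      rw [hc0, hc1, natCard_class n f 0, natCard_class n f 1]
      have hdisj : Disjoint (Finset.univ.filter fun v : ZMod n => f v = 0)
          (Finset.univ.filter fun v : ZMod n => f v = 1) := by
        rw [Finset.disjoint_left]
        intro a ha hb
        simp only [Finset.mem_filter, Finset.mem_univ, true_and] at ha hb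
        exact absurd (ha.symm.trans hb) (by decide)
      rw [← Finset.card_union_of_disjoint hdisj]
      have : (Finset.univ.filter fun v : ZMod n => f v = 0) ∪
          (Finset.univ.filter fun v : ZMod n => f v = 1) = Finset.univ := by
        ext v
        simp only [Finset.mem_union, Finset.mem_filter, Finset.mem_univ, true_and]
        simpa using fin2_cases (f v)
      rw [this, Finset.card_univ, ZMod.card]
    have hc0d : d ≤ c0 := by
      obtain ⟨hb1, hb2⟩ := hbal
      rw [← hc0, ← hc1] at hb1 hb2
      omega
    have hc1d : d ≤ c1 := by
      obtain ⟨hb1, hb2⟩ := hbal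
      rw [← hc0, ← hc1] at hb1 hb2
      omega
    -- the two boolean words
    set s0 : ℕ → Bool := fun x => f (x : ZMod n) == 0 with hs0
    set s1 : ℕ → Bool := fun x => f (x : ZMod n) == 1 with hs1
    have hnot0 : (fun x => ! s0 x) = s1 := by
      funext x
      rcases fin2_cases (f (x : ZMod n)) with h | h <;> simp [hs0, hs1, h]
    have hnot1 : (fun x => ! s1 x) = s0 := by
      funext x
      rcases fin2_cases (f (x : ZMod n)) with h | h <;> simp [hs0, hs1, h]
    have hcnt0 : cnt n s0 = c0 := cnt_class n f 0
    have hcnt1 : cnt n s1 = c1 := cnt_class n f 1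
    have hW0 : d * (d + 1) ≤ 2 * (W n d s0).card := by
      apply main_word d (by omega) n hn s0 (by omega)
      rw [hnot0]; omega
    have hW1 : d * (d + 1) ≤ 2 * (W n d s1).card := by
      apply main_word d (by omega) n hn s1 (by omega)
      rw [hnot1]; omega
    -- injection into bichromatic edges
    set φ : ℕ × ℕ → Sym2 (ZMod n) := fun p => s((p.1 : ZMod n), (p.1 : ZMod n) + (p.2 : ℕ)) with hφ
    have hcast_ne : ∀ k : ℕ, 1 ≤ k → k ≤ 2 * d → ((k : ℕ) : ZMod n) ≠ 0 := by
      intro k h1 h2 h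
      rw [ZMod.natCast_eq_zero_iff] at h
      have := Nat.le_of_dvd (by omega) h
      omega
    have hcast_inj : ∀ x y : ℕ, x < n → y < n → ((x : ZMod n) = (y : ZMod n)) → x = y := by
      intro x y hx hy h
      have := congrArg ZMod.val h
      rwa [ZMod.val_cast_of_lt hx, ZMod.val_cast_of_lt hy] at this
    have hmodcast : ∀ x k : ℕ, (((x + k) % n : ℕ) : ZMod n) = (x : ZMod n) + (k : ℕ) := by
      intro x k
      rw [ZMod.natCast_mod, Nat.cast_add]
    -- the union of the two pair sets
    have hdisjW : Disjoint (W n d s0) (W n d s1) := by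
      simp only [Finset.disjoint_left]
      rintro ⟨x, k⟩ h0 h1
      rw [mem_W] at h0 h1
      have e0 : s0 x = true := h0.2.2.2.1
      have e1 : s1 x = true := h1.2.2.2.1
      simp only [hs0, beq_iff_eq] at e0
      simp only [hs1, beq_iff_eq] at e1
      exact absurd (e0.symm.trans e1) (by decide)
    have hmem : ∀ p ∈ W n d s0 ∪ W n d s1, φ p ∈ bichromatic (cyclePow n d) f := by
      rintro ⟨x, k⟩ hp
      have hcases : ((x, k) ∈ W n d s0 ∧ f (x : ZMod n) = 0 ∧ f ((x : ZMod n) + (k : ℕ)) = 1)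
          ∨ ((x, k) ∈ W n d s1 ∧ f (x : ZMod n) = 1 ∧ f ((x : ZMod n) + (k : ℕ)) = 0) := by
        rcases Finset.mem_union.mp hp with h | h <;> rw [mem_W] at h <;>
          obtain ⟨hx, hk1, hk2, hc1, hc2⟩ := h
        · left
          refine ⟨mem_W.mpr ⟨hx, hk1, hk2, hc1, hc2⟩, ?_, ?_⟩
          · simpa [hs0] using hc1
          · rw [← hmodcast]
            simp only [hs0, beq_eq_false_iff_ne, ne_eq] at hc2
            rcases fin2_cases (f (((x + k) % n : ℕ) : ZMod n)) with h | h
            · exact absurd h hc2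
            · exact h
        · right
          refine ⟨mem_W.mpr ⟨hx, hk1, hk2, hc1, hc2⟩, ?_, ?_⟩
          · simpa [hs1] using hc1
          · rw [← hmodcast]
            simp only [hs1, beq_eq_false_iff_ne, ne_eq] at hc2
            rcases fin2_cases (f (((x + k) % n : ℕ) : ZMod n)) with h | h
            · exact h
            · exact absurd h hc2
      have hk : 1 ≤ k ∧ k ≤ d := by
        rcases hcases with ⟨h, -, -⟩ | ⟨h, -, -⟩ <;> exact ⟨(mem_W.mp h).2.1, (mem_W.mp h).2.2.1⟩
      have hne : (x : ZMod n) ≠ (x : ZMod n) + (k : ℕ) := by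
        intro h
        have : ((k : ℕ) : ZMod n) = 0 := by
          have := h.symm
          rwa [add_eq_left] at this
        exact hcast_ne k hk.1 (by omega) this
      constructor
      · rw [SimpleGraph.mem_edgeSet]
        exact ⟨hne, k, hk.1, hk.2, Or.inl rfl⟩
      · rw [Sym2.lift_mk]
        show f ((x : ZMod n)) ≠ f ((x : ZMod n) + (k : ℕ))
        rcases hcases with ⟨-, h1, h2⟩ | ⟨-, h1, h2⟩ <;> rw [h1, h2] <;> decide
    have hinj : Set.InjOn φ (W n d s0 ∪ W n d s1) := by
      rintro ⟨x, k⟩ hp ⟨y, l⟩ hq h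
      have hp' : (x, k) ∈ W n d s0 ∪ W n d s1 := by simpa using hp
      have hq' : (y, l) ∈ W n d s0 ∪ W n d s1 := by simpa using hq
      have hpm : x < n ∧ 1 ≤ k ∧ k ≤ d := by
        rcases Finset.mem_union.mp hp' with h' | h' <;> rw [mem_W] at h' <;>
          exact ⟨h'.1, h'.2.1, h'.2.2.1⟩
      have hqm : y < n ∧ 1 ≤ l ∧ l ≤ d := by
        rcases Finset.mem_union.mp hq' with h' | h' <;> rw [mem_W] at h' <;>
          exact ⟨h'.1, h'.2.1, h'.2.2.1⟩
      simp only [hφ, Sym2.eq_iff] at h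
      rcases h with ⟨h1, h2⟩ | ⟨h1, h2⟩
      · have hxy : x = y := hcast_inj x y hpm.1 hqm.1 h1
        subst hxy
        have : ((k : ℕ) : ZMod n) = ((l : ℕ) : ZMod n) := by
          exact add_left_cancel h2
        have : k = l := hcast_inj k l (by omega) (by omega) this
        simp [this]
      · exfalso
        -- x = y + l and y = x + k in ZMod n
        have : ((k + l : ℕ) : ZMod n) = 0 := by
          have e1 : (x : ZMod n) = (y : ZMod n) + (l : ℕ) := h1
          have e2 : (y : ZMod n) = (x : ZMod n) + (k : ℕ) := h2.symm
          rw [e2] at e1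
          push_cast at e1 ⊢
          -- e1 : x = x + k + l
          have := e1.symm
          rw [add_assoc, add_eq_left] at this
          rw [this]
        exact hcast_ne (k + l) (by omega) (by omega) this
    -- conclude
    have hfin : (bichromatic (cyclePow n d) f).Finite := Set.toFinite _
    have hsub : ↑((W n d s0 ∪ W n d s1).image φ) ⊆ bichromatic (cyclePow n d) f := by
      intro e he
      simp only [Finset.coe_image, Set.mem_image, Finset.mem_coe] at he
      obtain ⟨p, hp, rfl⟩ := he
      exact hmem p hp
    have hcard : ((W n d s0 ∪ W n d s1).image φ).card = (W n d s0).card + (W n d s1).card := by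
      rw [Finset.card_image_of_injOn (s := W n d s0 ∪ W n d s1) (by exact fun p hp q hq => hinj (by simp only [Finset.coe_union, Set.mem_union, Finset.mem_coe, Finset.mem_union] at hp ⊢; exact hp) (by simp only [Finset.coe_union, Set.mem_union, Finset.mem_coe, Finset.mem_union] at hq ⊢; exact hq)),
        Finset.card_union_of_disjoint hdisjW]
    have : (W n d s0).card + (W n d s1).card ≤ mixedCount (cyclePow n d) f := by
      rw [← hcard, mixedCount, ← Set.ncard_coe_finset]
      exact Set.ncard_le_ncard hsub hfin
    omega
  -- nonemptiness of the rna defining set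
  set f₀ : ZMod n → Fin 2 := fun v => if 2 * v.val + 1 < n then 0 else 1 with hf₀
  have hbal₀ : BalancedColoring f₀ := by
    classical
    have h0 : Nat.card {v : ZMod n | f₀ v = 0} = n / 2 := by
      rw [natCard_class]
      have : (Finset.univ.filter fun v : ZMod n => f₀ v = 0)
          = (Finset.univ.filter fun v : ZMod n => 2 * v.val + 1 < n) := by
        apply Finset.filter_congr
        intro v _
        simp only [hf₀]
        split_ifs with h <;> simp [h]
      rw [this, card_zmod_filter n (fun x => 2 * x + 1 < n)]
      have : ((Finset.range n).filter fun x => 2 * x + 1 < n) = Finset.range (n / 2) := by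
        ext x
        simp only [Finset.mem_filter, Finset.mem_range]
        omega
      rw [this, Finset.card_range]
    have h1 : Nat.card {v : ZMod n | f₀ v = 1} = n - n / 2 := by
      rw [natCard_class]
      have : (Finset.univ.filter fun v : ZMod n => f₀ v = 1)
          = (Finset.univ.filter fun v : ZMod n => ¬ (2 * v.val + 1 < n)) := by
        apply Finset.filter_congr
        intro v _
        simp only [hf₀]
        split_ifs with h <;> simp [h]
      rw [this, card_zmod_filter n (fun x => ¬ (2 * x + 1 < n))]
      have : ((Finset.range n).filter fun x => ¬ (2 * x + 1 < n))
          = Finset.Ico (n / 2) n := by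
        ext x
        simp only [Finset.mem_filter, Finset.mem_range, Finset.mem_Ico]
        omega
      rw [this, Nat.card_Ico]
    constructor <;> rw [h0, h1] <;> push_cast <;> omega
  have hne : {k | ∃ f : ZMod n → Fin 2, BalancedColoring f ∧
      mixedCount (cyclePow n d) f = k}.Nonempty :=
    ⟨mixedCount (cyclePow n d) f₀, f₀, hbal₀, rfl⟩
  rw [rna]
  apply le_csInf hne
  rintro k ⟨f, hbal, rfl⟩
  exact key f hbal
end

section
/- For every n ≥ 5, σ⁻¹(C_n^2) = 6. -/
open Finset

namespace Stmt13Aux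

variable {n : ℕ}

/-- distance-1 boundaries -/
def bSet [NeZero n] (f : ZMod n → Fin 2) : Finset (ZMod n) :=
  univ.filter fun i => f i ≠ f (i+1)

/-- distance-2 boundaries -/
def cSet [NeZero n] (f : ZMod n → Fin 2) : Finset (ZMod n) :=
  univ.filter fun i => f i ≠ f (i+2)

/-- boundaries with long block to the left -/
def lSet [NeZero n] (f : ZMod n → Fin 2) : Finset (ZMod n) :=
  univ.filter fun i => f (i-1) = f i ∧ f i ≠ f (i+1)

/-- boundaries with long block to the right -/
def rSet [NeZero n] (f : ZMod n → Fin 2) : Finset (ZMod n) :=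
  univ.filter fun i => f i ≠ f (i+1) ∧ f (i+1) = f (i+2)

lemma czero (hn : 5 ≤ n) (k : ℕ) (h1 : 0 < k) (h2 : k < n) : ((k : ℕ) : ZMod n) ≠ 0 := by
  haveI : NeZero n := ⟨by omega⟩
  intro h
  rw [ZMod.natCast_eq_zero_iff] at h
  have := Nat.le_of_dvd h1 h
  omega

lemma cast_self [NeZero n] (a : ZMod n) : ((a.val : ℕ) : ZMod n) = a :=
  ZMod.natCast_rightInverse a

/-- walk lemma -/
lemma walk [NeZero n] (f : ZMod n → Fin 2) (i : ZMod n) :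
    ∀ t : ℕ, (∀ m : ℕ, m < t → f (i + m + 1) = f (i + m)) → f (i + t) = f i := by
  intro t
  induction t with
  | zero => intro _; simp
  | succ t ih =>
    intro h
    have h1 : (((t+1:ℕ)) : ZMod n) = (t : ZMod n) + 1 := by push_cast; ring
    rw [h1, ← add_assoc, h t (by omega), ih (fun m hm => h m (by omega))]
lemma closed_succ [NeZero n] (A : Finset (ZMod n)) (hne : A.Nonempty)
    (h : ∀ i ∈ A, i + 1 ∈ A) : A = univ := by
  obtain ⟨i, hi⟩ := hne
  have key : ∀ k : ℕ, i + (k : ZMod n) ∈ A := by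
    intro k
    induction k with
    | zero => simpa using hi
    | succ k ih =>
      have : i + ((k+1 : ℕ) : ZMod n) = (i + k) + 1 := by push_cast; ring
      rw [this]; exact h _ ih
  apply Finset.eq_univ_iff_forall.mpr
  intro j
  have : i + ((j - i).val : ZMod n) = j := by rw [cast_self]; ring
  rw [← this]; exact key _
lemma closed_pred [NeZero n] (A : Finset (ZMod n)) (hne : A.Nonempty)
    (h : ∀ i ∈ A, i - 1 ∈ A) : A = univ := by
  obtain ⟨i, hi⟩ := hne
  have key : ∀ k : ℕ, i - (k : ZMod n) ∈ A := by
    intro k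
    induction k with
    | zero => simpa using hi
    | succ k ih =>
      have : i - ((k+1 : ℕ) : ZMod n) = (i - k) - 1 := by push_cast; ring
      rw [this]; exact h _ ih
  apply Finset.eq_univ_iff_forall.mpr
  intro j
  have : i - ((i - j).val : ZMod n) = j := by rw [cast_self]; ring
  rw [← this]; exact key _
lemma b_even [NeZero n] (f : ZMod n → Fin 2) : 2 ∣ (bSet f).card := by
  have key : (((bSet f).card : ℕ) : ZMod 2) = 0 := by
    rw [Finset.card_eq_sum_ones, Nat.cast_sum]
    push_cast
    rw [bSet, Finset.sum_filter]
    have step : ∀ i : ZMod n, (if f i ≠ f (i+1) then (1 : ZMod 2) else 0)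
        = ((f i).val : ZMod 2) + ((f (i+1)).val : ZMod 2) := by
      intro i
      have h1 : f i = 0 ∨ f i = 1 := by omega
      have h2 : f (i+1) = 0 ∨ f (i+1) = 1 := by omega
      rcases h1 with h1 | h1 <;> rcases h2 with h2 | h2 <;> simp [h1, h2] <;> decide
    rw [Finset.sum_congr rfl (fun i _ => step i), Finset.sum_add_distrib]
    have : ∑ i : ZMod n, ((f (i+1)).val : ZMod 2) = ∑ i : ZMod n, ((f i).val : ZMod 2) :=
      Fintype.sum_equiv (Equiv.addRight (1 : ZMod n)) _ _ (fun i => rfl)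
    rw [this, ← two_mul]
    rw [mul_eq_zero]; left; decide
  rwa [ZMod.natCast_eq_zero_iff] at key
lemma c_ge_lr (hn : 5 ≤ n) [NeZero n] (f : ZMod n → Fin 2) :
    (lSet f).card + (rSet f).card ≤ (cSet f).card := by
  have hsub : ((lSet f).image (· - 1)) ∪ rSet f ⊆ cSet f := by
    intro x hx
    rcases Finset.mem_union.mp hx with hx | hx
    · obtain ⟨y, hy, rfl⟩ := Finset.mem_image.mp hx
      rw [lSet, Finset.mem_filter] at hy
      rw [cSet, Finset.mem_filter]
      refine ⟨Finset.mem_univ _, ?_⟩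
      have : y - 1 + 2 = y + 1 := by ring
      rw [this, hy.2.1]
      exact hy.2.2
    · rw [rSet, Finset.mem_filter] at hx
      rw [cSet, Finset.mem_filter]
      refine ⟨Finset.mem_univ _, ?_⟩
      have h2 : f (x+2) = f (x+1) := hx.2.2.symm
      rw [h2]; exact hx.2.1
  have hinj : Function.Injective (fun a : ZMod n => a - 1) := by
    intro a b h
    have : a - 1 + 1 = b - 1 + 1 := congrArg (· + 1) h
    simpa using this
  calc (lSet f).card + (rSet f).card
      = ((lSet f).image (· - 1)).card + (rSet f).card := by
        rw [Finset.card_image_of_injective _ hinj]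
    _ = (((lSet f).image (· - 1)) ∪ rSet f).card := by
        rw [Finset.card_union_of_disjoint]
        rw [Finset.disjoint_left]
        intro x hxl hxr
        obtain ⟨y, hy, hxy⟩ := Finset.mem_image.mp hxl
        rw [lSet, Finset.mem_filter] at hy
        rw [rSet, Finset.mem_filter] at hxr
        apply hxr.2.1
        have hx1 : x + 1 = y := by rw [← hxy]; ring
        rw [hx1, ← hxy]
        exact hy.2.1
    _ ≤ (cSet f).card := Finset.card_le_card hsub
lemma key1 (hn : 5 ≤ n) [NeZero n] (f : ZMod n → Fin 2) :
    mixedCount (cyclePow n 2) f = (bSet f).card + (cSet f).card := by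
  classical
  have c1 : ((1 : ℕ) : ZMod n) ≠ 0 := czero hn 1 (by omega) (by omega)
  have c2 : ((2 : ℕ) : ZMod n) ≠ 0 := czero hn 2 (by omega) (by omega)
  have c3 : ((3 : ℕ) : ZMod n) ≠ 0 := czero hn 3 (by omega) (by omega)
  have c4 : ((4 : ℕ) : ZMod n) ≠ 0 := czero hn 4 (by omega) (by omega)
  have c1' : (1 : ZMod n) ≠ 0 := by push_cast at c1; exact c1
  have c2' : (2 : ZMod n) ≠ 0 := by push_cast at c2; exact c2
  have c3' : (3 : ZMod n) ≠ 0 := by push_cast at c3; exact c3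
  have c4' : (4 : ZMod n) ≠ 0 := by push_cast at c4; exact c4
  set F : Finset (Sym2 (ZMod n)) :=
    ((bSet f).image (fun i => s(i, i+1))) ∪ ((cSet f).image (fun i => s(i, i+2))) with hF
  have hset : bichromatic (cyclePow n 2) f = ↑F := by
    ext e
    induction e using Sym2.ind with
    | _ u v =>
      simp only [bichromatic, Set.mem_setOf_eq, SimpleGraph.mem_edgeSet, Sym2.lift_mk,
        hF, Finset.coe_union, Set.mem_union, Finset.coe_image, Set.mem_image,
        Finset.mem_coe, bSet, cSet, Finset.mem_filter, Finset.mem_univ, true_and]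
      constructor
      · rintro ⟨⟨huv, j, hj1, hj2, hcase⟩, hne⟩
        interval_cases j
        · rcases hcase with h | h
          · left
            refine ⟨u, ?_, ?_⟩
            · push_cast at h; rw [← h]; exact hne
            · push_cast at h; rw [h]
          · left
            refine ⟨v, ?_, ?_⟩
            · push_cast at h; rw [← h]; exact hne.symm
            · push_cast at h; rw [← h]; exact Sym2.eq_swap
        · rcases hcase with h | h
          · right
            refine ⟨u, ?_, ?_⟩
            · push_cast at h; rw [← h]; exact hne
            · push_cast at h; rw [h]
          · right
            refine ⟨v, ?_, ?_⟩
            · push_cast at h; rw [← h]; exact hne.symm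
            · push_cast at h; rw [← h]; exact Sym2.eq_swap
      · rintro (⟨i, hi, he⟩ | ⟨i, hi, he⟩)
        · have he' : s(i, i+1) = s(u, v) := he
          rw [Sym2.eq_iff] at he'
          rcases he' with ⟨rfl, rfl⟩ | ⟨h1, h2⟩
          · refine ⟨⟨?_, 1, le_refl _, by omega, Or.inl (by push_cast; ring)⟩, hi⟩
            intro h; apply c1'; exact (left_eq_add.mp h)
          · subst h1; subst h2
            refine ⟨⟨?_, 1, le_refl _, by omega, Or.inr (by push_cast; ring)⟩, hi.symm⟩
            intro h; apply c1'; exact (left_eq_add.mp h.symm)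
        · have he' : s(i, i+2) = s(u, v) := he
          rw [Sym2.eq_iff] at he'
          rcases he' with ⟨rfl, rfl⟩ | ⟨h1, h2⟩
          · refine ⟨⟨?_, 2, by omega, le_refl _, Or.inl (by push_cast; ring)⟩, hi⟩
            intro h; apply c2'; exact (left_eq_add.mp h)
          · subst h1; subst h2
            refine ⟨⟨?_, 2, by omega, le_refl _, Or.inr (by push_cast; ring)⟩, hi.symm⟩
            intro h; apply c2'; exact (left_eq_add.mp h.symm)
  rw [mixedCount, hset, Set.ncard_coe_finset]
  have hinj1 : Function.Injective (fun i : ZMod n => s(i, i+1)) := by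
    intro a b h
    simp only [Sym2.eq_iff] at h
    rcases h with ⟨h1, _⟩ | ⟨h1, h2⟩
    · exact h1
    · exfalso; apply c2'; linear_combination h2 - h1
  have hinj2 : Function.Injective (fun i : ZMod n => s(i, i+2)) := by
    intro a b h
    simp only [Sym2.eq_iff] at h
    rcases h with ⟨h1, _⟩ | ⟨h1, h2⟩
    · exact h1
    · exfalso; apply c4'; linear_combination h2 - h1
  have hdisj : Disjoint ((bSet f).image (fun i => s(i, i+1))) ((cSet f).image (fun i => s(i, i+2))) := by
    rw [Finset.disjoint_left]
    rintro e he1 he2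
    obtain ⟨i, _, hi⟩ := Finset.mem_image.mp he1
    obtain ⟨j, _, hj⟩ := Finset.mem_image.mp he2
    rw [← hj] at hi
    rw [Sym2.eq_iff] at hi
    rcases hi with ⟨h1, h2⟩ | ⟨h1, h2⟩
    · apply c1'; linear_combination h1 - h2
    · apply c3'; linear_combination h2 - h1
  rw [hF, Finset.card_union_of_disjoint hdisj, Finset.card_image_of_injective _ hinj1,
    Finset.card_image_of_injective _ hinj2]
lemma class_cards [NeZero n] (f : ZMod n → Fin 2) :
    (univ.filter fun v : ZMod n => f v = 0).card + (univ.filter fun v : ZMod n => f v = 1).card = n := by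
  classical
  have h : (univ.filter fun v : ZMod n => f v = 1) = (univ.filter fun v : ZMod n => ¬ f v = 0) := by
    apply Finset.filter_congr
    intro x _
    constructor
    · intro h; rw [h]; decide
    · intro h; omega
  rw [h, Finset.card_filter_add_card_filter_not (p := fun v => f v = 0)]
  simp [ZMod.card]
lemma balanced_cards [NeZero n] (f : ZMod n → Fin 2) (hb : BalancedColoring f) :
    ((univ.filter fun v : ZMod n => f v = 0).card : ℤ) - (univ.filter fun v : ZMod n => f v = 1).card ≤ 1 ∧
    ((univ.filter fun v : ZMod n => f v = 1).card : ℤ) - (univ.filter fun v : ZMod n => f v = 0).card ≤ 1 := by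
  classical
  have h0 : Nat.card {v | f v = 0} = (univ.filter fun v : ZMod n => f v = 0).card := by
    simp [Nat.card_eq_fintype_card, Fintype.card_subtype]
  have h1 : Nat.card {v | f v = 1} = (univ.filter fun v : ZMod n => f v = 1).card := by
    simp [Nat.card_eq_fintype_card, Fintype.card_subtype]
  obtain ⟨hb1, hb2⟩ := hb
  rw [h0, h1] at hb1 hb2
  exact ⟨hb1, hb2⟩
lemma lower (hn : 5 ≤ n) [NeZero n] (f : ZMod n → Fin 2) (hb : BalancedColoring f) :
    6 ≤ (bSet f).card + (cSet f).card := by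
  classical
  have c1' : (1 : ZMod n) ≠ 0 := by
    have := czero hn 1 (by omega) (by omega); push_cast at this; exact this
  have hcards := class_cards f
  have hbal := balanced_cards f hb
  have heven := b_even f
  have hclr := c_ge_lr hn f
  -- b ≠ 0
  have hb0 : (bSet f).card ≠ 0 := by
    intro h0
    rw [Finset.card_eq_zero] at h0
    have hc : ∀ v : ZMod n, f v = f 0 := by
      intro v
      have hv : v = (0 : ZMod n) + ((v.val : ℕ) : ZMod n) := by rw [cast_self]; ring
      rw [hv]
      apply walk
      intro m _
      have hmem : ((0:ZMod n) + (m : ZMod n)) ∉ bSet f := by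
        rw [h0]; exact Finset.notMem_empty _
      rw [bSet, Finset.mem_filter] at hmem
      push_neg at hmem
      exact (hmem (Finset.mem_univ _)).symm
    rcases (show f 0 = 0 ∨ f 0 = 1 by omega) with h | h
    · have he : (univ.filter fun v : ZMod n => f v = 1) = ∅ := by
        rw [Finset.filter_eq_empty_iff]
        intro x _
        rw [hc x, h]; decide
      rw [he] at hcards hbal
      simp at hcards hbal
      omega
    · have he : (univ.filter fun v : ZMod n => f v = 0) = ∅ := by
        rw [Finset.filter_eq_empty_iff]
        intro x _
        rw [hc x, h]; decide
      rw [he] at hcards hbal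
      simp at hcards hbal
      omega
  rcases (show (bSet f).card = 2 ∨ (bSet f).card = 4 ∨ 6 ≤ (bSet f).card by omega)
    with h2 | h4 | h6
  · -- b = 2
    obtain ⟨x, y, hxy, hA⟩ := Finset.card_eq_two.mp h2
    by_cases hadj : y = x + 1 ∨ x = y + 1
    · -- adjacent: contradiction with balance
      exfalso
      have hz : ∃ z : ZMod n, bSet f = {z, z+1} := by
        rcases hadj with h | h
        · exact ⟨x, by rw [hA, h]⟩
        · refine ⟨y, ?_⟩
          rw [hA, h]
          exact Finset.pair_comm _ _
      obtain ⟨z, hz⟩ := hz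
      have hkey : ∀ v : ZMod n, v ≠ z + 1 → f v = f (z + 2) := by
        intro v hv
        have ht : v = (z + 2) + (((v - (z+2)).val : ℕ) : ZMod n) := by rw [cast_self]; ring
        set t := (v - (z+2)).val with htdef
        have htlt : t < n := ZMod.val_lt _
        have htn : t ≠ n - 1 := by
          intro h
          apply hv
          have h1 : v - (z+2) = ((n-1 : ℕ) : ZMod n) := by rw [← h, cast_self]
          have hn1 : ((n-1:ℕ) : ZMod n) = -1 := by
            have h2 : ((n-1:ℕ) : ZMod n) + 1 = 0 := by
              have e : (((n-1)+1 : ℕ) : ZMod n) = ((n-1:ℕ):ZMod n) + 1 := by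
                rw [Nat.cast_add, Nat.cast_one]
              rw [← e, show n-1+1 = n by omega, ZMod.natCast_self]
            linear_combination h2
          rw [hn1] at h1
          linear_combination h1
        rw [ht]
        apply walk
        intro m hm
        have hne1 : (z + 2 : ZMod n) + (m : ZMod n) ≠ z := by
          intro h
          have hc2 : ((m + 2 : ℕ) : ZMod n) = 0 := by push_cast; linear_combination h
          exact czero hn (m+2) (by omega) (by omega) hc2
        have hne2 : (z + 2 : ZMod n) + (m : ZMod n) ≠ z + 1 := by
          intro h
          have hc2 : ((m + 1 : ℕ) : ZMod n) = 0 := by push_cast; linear_combination h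
          exact czero hn (m+1) (by omega) (by omega) hc2
        have hmem : (z + 2 : ZMod n) + (m : ZMod n) ∉ bSet f := by
          rw [hz]
          simp only [Finset.mem_insert, Finset.mem_singleton]
          push_neg
          exact ⟨hne1, hne2⟩
        rw [bSet, Finset.mem_filter] at hmem
        push_neg at hmem
        exact (hmem (Finset.mem_univ _)).symm
      have hz1 : f (z+1) ≠ f (z+2) := by
        have hm : z + 1 ∈ bSet f := by rw [hz]; simp
        rw [bSet, Finset.mem_filter] at hm
        have := hm.2
        rwa [show z + 1 + 1 = z + 2 by ring] at this
      have hclass : (univ.filter fun v : ZMod n => f v = f (z+1)) = {z+1} := by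
        ext v
        simp only [Finset.mem_filter, Finset.mem_univ, true_and, Finset.mem_singleton]
        constructor
        · intro h
          by_contra hv
          exact hz1 (by rw [← h, hkey v hv])
        · intro h; rw [h]
      have hcard1 : (univ.filter fun v : ZMod n => f v = f (z+1)).card = 1 := by
        rw [hclass]; simp
      rcases (show f (z+1) = 0 ∨ f (z+1) = 1 by omega) with h | h
      · rw [h] at hcard1; rw [hcard1] at hcards hbal; omega
      · rw [h] at hcard1; rw [hcard1] at hcards hbal; omega
    · -- non-adjacent: lSet and rSet each have ≥ 2 elements
      push_neg at hadj
      obtain ⟨had1, had2⟩ := hadj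
      have hLR : ∀ z ∈ bSet f, z ∈ lSet f ∧ z ∈ rSet f := by
        intro z hzB
        have hzB' := hzB
        rw [bSet, Finset.mem_filter] at hzB'
        have hzm := hzB
        rw [hA] at hzm
        simp only [Finset.mem_insert, Finset.mem_singleton] at hzm
        have hpred : z - 1 ∉ bSet f := by
          rw [hA]
          simp only [Finset.mem_insert, Finset.mem_singleton]
          push_neg
          rcases hzm with rfl | rfl
          · constructor
            · intro h; exact c1' (by linear_combination -h)
            · intro h; exact had2 (by linear_combination h)
          · constructor
            · intro h; exact had1 (by linear_combination h)
            · intro h; exact c1' (by linear_combination -h)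
        have hsucc : z + 1 ∉ bSet f := by
          rw [hA]
          simp only [Finset.mem_insert, Finset.mem_singleton]
          push_neg
          rcases hzm with rfl | rfl
          · constructor
            · intro h; exact c1' (by linear_combination h)
            · intro h; exact had1 h.symm
          · constructor
            · intro h; exact had2 h.symm
            · intro h; exact c1' (by linear_combination h)
        rw [bSet, Finset.mem_filter] at hpred hsucc
        push_neg at hpred hsucc
        have hp := hpred (Finset.mem_univ _)
        have hs := hsucc (Finset.mem_univ _)
        rw [show z - 1 + 1 = z by ring] at hp
        rw [show z + 1 + 1 = z + 2 by ring] at hs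
        constructor
        · rw [lSet, Finset.mem_filter]
          exact ⟨Finset.mem_univ _, hp, hzB'.2⟩
        · rw [rSet, Finset.mem_filter]
          exact ⟨Finset.mem_univ _, hzB'.2, hs⟩
      have hL := Finset.card_le_card (fun z hz => (hLR z hz).1)
      have hR := Finset.card_le_card (fun z hz => (hLR z hz).2)
      omega
  · -- b = 4
    have hRne : (rSet f).Nonempty := by
      rw [Finset.nonempty_iff_ne_empty]
      intro hRe
      have hcl : ∀ i ∈ bSet f, i + 1 ∈ bSet f := by
        intro i hi
        have hi' := hi
        rw [bSet, Finset.mem_filter] at hi'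
        have : i ∉ rSet f := by rw [hRe]; exact Finset.notMem_empty _
        rw [rSet, Finset.mem_filter] at this
        push_neg at this
        have h12 := this (Finset.mem_univ _) hi'.2
        rw [bSet, Finset.mem_filter]
        refine ⟨Finset.mem_univ _, ?_⟩
        rwa [show i + 1 + 1 = i + 2 by ring]
      have := closed_succ (bSet f) (Finset.card_pos.mp (by omega)) hcl
      rw [this, Finset.card_univ, ZMod.card] at h4
      omega
    have hLne : (lSet f).Nonempty := by
      rw [Finset.nonempty_iff_ne_empty]
      intro hLe
      have hcl : ∀ i ∈ bSet f, i - 1 ∈ bSet f := by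
        intro i hi
        have hi' := hi
        rw [bSet, Finset.mem_filter] at hi'
        have : i ∉ lSet f := by rw [hLe]; exact Finset.notMem_empty _
        rw [lSet, Finset.mem_filter] at this
        push_neg at this
        have h12 : f (i - 1) ≠ f i := by
          intro h
          exact hi'.2 (this (Finset.mem_univ _) h)
        rw [bSet, Finset.mem_filter]
        refine ⟨Finset.mem_univ _, ?_⟩
        rwa [show i - 1 + 1 = i by ring]
      have := closed_pred (bSet f) (Finset.card_pos.mp (by omega)) hcl
      rw [this, Finset.card_univ, ZMod.card] at h4
      omega
    have hLc := Finset.card_pos.mpr hLne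
    have hRc := Finset.card_pos.mpr hRne
    omega
  · omega
def f0 (n : ℕ) [NeZero n] : ZMod n → Fin 2 := fun i => if i.val < (n+1)/2 then 0 else 1

lemma f0_balanced (hn : 5 ≤ n) [NeZero n] : BalancedColoring (f0 n) := by
  classical
  have hfil : (univ.filter fun v : ZMod n => f0 n v = 0)
      = (univ.filter fun v : ZMod n => v.val < (n+1)/2) := by
    apply Finset.filter_congr
    intro x _
    simp only [f0]
    split_ifs with hx
    · simpa using hx
    · simpa using hx
  have hcard0 : (univ.filter fun v : ZMod n => v.val < (n+1)/2).card = (n+1)/2 := by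
    have : (univ.filter fun v : ZMod n => v.val < (n+1)/2).card = (Finset.range ((n+1)/2)).card := by
      apply Finset.card_bij (fun (v : ZMod n) _ => v.val)
      · intro a ha
        rw [Finset.mem_filter] at ha
        rw [Finset.mem_range]
        exact ha.2
      · intro a _ b _ hab
        rw [← cast_self a, ← cast_self b, hab]
      · intro k hk
        rw [Finset.mem_range] at hk
        refine ⟨((k:ℕ) : ZMod n), ?_, ?_⟩
        · rw [Finset.mem_filter]
          refine ⟨Finset.mem_univ _, ?_⟩
          rw [ZMod.val_cast_of_lt (by omega)]
          exact hk
        · rw [ZMod.val_cast_of_lt (by omega)]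
    rw [this, Finset.card_range]
  have hc0 : (univ.filter fun v : ZMod n => f0 n v = 0).card = (n+1)/2 := by
    rw [hfil, hcard0]
  have hc1 := class_cards (f0 n)
  have h0 : Nat.card {v | f0 n v = 0} = (univ.filter fun v : ZMod n => f0 n v = 0).card := by
    simp [Nat.card_eq_fintype_card, Fintype.card_subtype]
  have h1 : Nat.card {v | f0 n v = 1} = (univ.filter fun v : ZMod n => f0 n v = 1).card := by
    simp [Nat.card_eq_fintype_card, Fintype.card_subtype]
  constructor
  · rw [h0, h1]; omega
  · rw [h0, h1]; omega
lemma f0_upper (hn : 5 ≤ n) [NeZero n] : mixedCount (cyclePow n 2) (f0 n) ≤ 6 := by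
  classical
  haveI : Fact (1 < n) := ⟨by omega⟩
  have hh1 : 3 ≤ (n+1)/2 := by omega
  have hh2 : (n+1)/2 + 2 ≤ n := by omega
  have hlp1 : ∀ u : ZMod n, f0 n u ≠ f0 n (u+1) →
      u = (((n+1)/2-1 : ℕ) : ZMod n) ∨ u = ((n-1 : ℕ) : ZMod n) := by
    intro u hne
    have htlt : u.val < n := ZMod.val_lt u
    have hcast : u = ((u.val : ℕ) : ZMod n) := (cast_self u).symm
    have hval1 : (u+1).val = (u.val + 1) % n := by
      rw [ZMod.val_add, ZMod.val_one]
    simp only [f0] at hne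
    rw [hval1] at hne
    rcases Nat.lt_or_ge (u.val + 1) n with hc | hc
    · rw [Nat.mod_eq_of_lt hc] at hne
      left
      have hv : u.val = (n+1)/2 - 1 := by
        by_contra hx
        apply hne
        have hiff : (u.val < (n+1)/2) ↔ (u.val + 1 < (n+1)/2) := by omega
        by_cases hth : u.val < (n+1)/2
        · rw [if_pos hth, if_pos (hiff.mp hth)]
        · rw [if_neg hth, if_neg (fun hcon => hth (hiff.mpr hcon))]
      rw [hcast, hv]
    · right
      rw [hcast, show u.val = n - 1 by omega]
  have hlp2 : ∀ u : ZMod n, f0 n u ≠ f0 n (u+2) →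
      u = (((n+1)/2-1 : ℕ) : ZMod n) ∨ u = ((n-1 : ℕ) : ZMod n) ∨
      u = (((n+1)/2-2 : ℕ) : ZMod n) ∨ u = ((n-2 : ℕ) : ZMod n) := by
    intro u hne
    have htlt : u.val < n := ZMod.val_lt u
    have hcast : u = ((u.val : ℕ) : ZMod n) := (cast_self u).symm
    have hval2 : (u+2).val = (u.val + 2) % n := by
      have h2 : (2 : ZMod n) = ((2:ℕ) : ZMod n) := by norm_cast
      rw [h2, ZMod.val_add, ZMod.val_cast_of_lt (by omega)]
    simp only [f0] at hne
    rw [hval2] at hne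
    rcases Nat.lt_or_ge (u.val + 2) n with hc | hc
    · rw [Nat.mod_eq_of_lt hc] at hne
      have hv : u.val = (n+1)/2 - 1 ∨ u.val = (n+1)/2 - 2 := by
        by_contra hx
        push_neg at hx
        apply hne
        have hiff : (u.val < (n+1)/2) ↔ (u.val + 2 < (n+1)/2) := by omega
        by_cases hth : u.val < (n+1)/2
        · rw [if_pos hth, if_pos (hiff.mp hth)]
        · rw [if_neg hth, if_neg (fun hcon => hth (hiff.mpr hcon))]
      rcases hv with hv | hv
      · left; rw [hcast, hv]
      · right; right; left; rw [hcast, hv]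
    · rcases (show u.val = n - 1 ∨ u.val = n - 2 by omega) with hv | hv
      · right; left; rw [hcast, hv]
      · right; right; right; rw [hcast, hv]
  set a := (((n+1)/2-1 : ℕ) : ZMod n) with ha
  set b := ((n-1 : ℕ) : ZMod n) with hbdef
  set c := (((n+1)/2-2 : ℕ) : ZMod n) with hcdef
  set d := ((n-2 : ℕ) : ZMod n) with hddef
  set S : Set (Sym2 (ZMod n)) :=
    {s(a,a+1), s(b,b+1), s(a,a+2), s(b,b+2), s(c,c+2), s(d,d+2)} with hS
  have hsub : bichromatic (cyclePow n 2) (f0 n) ⊆ S := by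
    intro e he
    induction e using Sym2.ind with
    | _ u v =>
      simp only [bichromatic, Set.mem_setOf_eq, SimpleGraph.mem_edgeSet, Sym2.lift_mk] at he
      obtain ⟨⟨huv, j, hj1, hj2, hcase⟩, hne⟩ := he
      interval_cases j
      · rcases hcase with hch | hch
        · push_cast at hch
          subst hch
          rcases hlp1 u hne with rfl | rfl
          · left; rfl
          · right; left; rfl
        · push_cast at hch
          subst hch
          rcases hlp1 v hne.symm with rfl | rfl
          · left; exact Sym2.eq_swap
          · right; left; exact Sym2.eq_swap
      · rcases hcase with hch | hch
        · push_cast at hch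
          subst hch
          rcases hlp2 u hne with rfl | rfl | rfl | rfl
          · right; right; left; rfl
          · right; right; right; left; rfl
          · right; right; right; right; left; rfl
          · right; right; right; right; right; rfl
        · push_cast at hch
          subst hch
          rcases hlp2 v hne.symm with rfl | rfl | rfl | rfl
          · right; right; left; exact Sym2.eq_swap
          · right; right; right; left; exact Sym2.eq_swap
          · right; right; right; right; left; exact Sym2.eq_swap
          · right; right; right; right; right; exact Sym2.eq_swap
  have h1 : mixedCount (cyclePow n 2) (f0 n) ≤ S.ncard :=
    Set.ncard_le_ncard hsub (Set.toFinite _)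
  have h2 : S.ncard ≤ 6 := by
    rw [hS]
    refine le_trans (Set.ncard_insert_le _ _) ?_
    have : ({s(b,b+1), s(a,a+2), s(b,b+2), s(c,c+2), s(d,d+2)} : Set (Sym2 (ZMod n))).ncard ≤ 5 := by
      refine le_trans (Set.ncard_insert_le _ _) ?_
      have : ({s(a,a+2), s(b,b+2), s(c,c+2), s(d,d+2)} : Set (Sym2 (ZMod n))).ncard ≤ 4 := by
        refine le_trans (Set.ncard_insert_le _ _) ?_
        have : ({s(b,b+2), s(c,c+2), s(d,d+2)} : Set (Sym2 (ZMod n))).ncard ≤ 3 := by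
          refine le_trans (Set.ncard_insert_le _ _) ?_
          have : ({s(c,c+2), s(d,d+2)} : Set (Sym2 (ZMod n))).ncard ≤ 2 := by
            refine le_trans (Set.ncard_insert_le _ _) ?_
            have : ({s(d,d+2)} : Set (Sym2 (ZMod n))).ncard ≤ 1 := by
              rw [Set.ncard_singleton]
            omega
          omega
        omega
      omega
    omega
  omega
end Stmt13Aux

theorem stmt13 (n : ℕ) (hn : 5 ≤ n) : rna (cyclePow n 2) = 6 := by
  haveI : NeZero n := ⟨by omega⟩
  classical
  set K := {k | ∃ f : ZMod n → Fin 2, BalancedColoring f ∧ mixedCount (cyclePow n 2) f = k} with hK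
  have hmem : mixedCount (cyclePow n 2) (Stmt13Aux.f0 n) ∈ K :=
    ⟨Stmt13Aux.f0 n, Stmt13Aux.f0_balanced hn, rfl⟩
  have hlow : ∀ k ∈ K, 6 ≤ k := by
    rintro k ⟨f, hf, rfl⟩
    rw [Stmt13Aux.key1 hn]
    exact Stmt13Aux.lower hn f hf
  have h1 : rna (cyclePow n 2) ≤ 6 :=
    le_trans (Nat.sInf_le hmem) (Stmt13Aux.f0_upper hn)
  have h2 : 6 ≤ rna (cyclePow n 2) := le_csInf ⟨_, hmem⟩ hlow
  omega
end
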